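/- Let φ be an argumentation kernel on [0,1]^n. The restriction of k_φ(x)_i = x_i(1+φ_i(x)) to H_φ is a homeomorphism from H_φ onto W = [0,1]^n with inverse h_φ; in particular the fixed-point map h_φ: W → H_φ is continuous. -/

import Mathlib

/-- The unit box `[0,1]^n` as a subset of `Fin n → ℝ`. -/
def unitBox (n : ℕ) : Set (Fin n → ℝ) := Set.pi Set.univ fun _ => Set.Icc (0:ℝ) 1

/-- An argumentation kernel function: continuous, nonnegative, monotone
(w.r.t. the componentwise order) and homogeneous (for scalars in `[0,1]`)
function on `[0,1]^n`. -/
def IsKernelFun (n : ℕ) (φ : (Fin n → ℝ) → ℝ) : Prop :=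
  ContinuousOn φ (unitBox n) ∧
  (∀ x ∈ unitBox n, 0 ≤ φ x) ∧
  (∀ x ∈ unitBox n, ∀ y ∈ unitBox n, (∀ i, x i ≤ y i) → φ x ≤ φ y) ∧
  (∀ x ∈ unitBox n, ∀ t ∈ Set.Icc (0:ℝ) 1, φ (fun j => t * x j) = t * φ x)

lemma mem_unitBox {n : ℕ} {x : Fin n → ℝ} :
    x ∈ unitBox n ↔ ∀ i, 0 ≤ x i ∧ x i ≤ 1 := by
  simp [unitBox, Set.mem_pi, Set.mem_Icc, Pi.le_def, forall_and]

lemma hscale {n : ℕ} (φ : Fin n → (Fin n → ℝ) → ℝ)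
    (hφ : ∀ i, IsKernelFun n (φ i)) :
    ∀ (t : ℝ), 0 ≤ t → t ≤ 1 → ∀ x ∈ unitBox n, ∀ y ∈ unitBox n,
      (∀ i, t * x i ≤ y i) → ∀ i, t * φ i x ≤ φ i y := by
  intro t ht0 ht1 x hx y hy hle i
  have htx : (fun j => t * x j) ∈ unitBox n := by
    rw [mem_unitBox] at hx ⊢
    intro j
    constructor
    · exact mul_nonneg ht0 (hx j).1
    · calc t * x j ≤ 1 * 1 := by
            apply mul_le_mul ht1 (hx j).2 (hx j).1 zero_le_one
          _ = 1 := by ring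
  have h1 : φ i (fun j => t * x j) ≤ φ i y :=
    (hφ i).2.2.1 _ htx y hy hle
  have h2 : φ i (fun j => t * x j) = t * φ i x :=
    (hφ i).2.2.2 x hx t ⟨ht0, ht1⟩
  linarith

/-- Key scaling-uniqueness lemma. -/
lemma key_eq {n : ℕ} (a b w A B : Fin n → ℝ)
    (ha0 : ∀ i, 0 ≤ a i) (hb0 : ∀ i, 0 ≤ b i)
    (hA0 : ∀ i, 0 ≤ A i) (hB0 : ∀ i, 0 ≤ B i)
    (ha : ∀ i, a i * (1 + A i) = w i) (hb : ∀ i, b i * (1 + B i) = w i)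
    (hab : ∀ t : ℝ, 0 ≤ t → t ≤ 1 → (∀ i, t * b i ≤ a i) → (∀ i, t * a i ≤ b i) →
      ∀ i, t * A i ≤ B i)
    (hba : ∀ t : ℝ, 0 ≤ t → t ≤ 1 → (∀ i, t * b i ≤ a i) → (∀ i, t * a i ≤ b i) →
      ∀ i, t * B i ≤ A i) :
    a = b := by
  set M : ℝ := ∑ i, (A i + B i) with hMdef
  have hM0 : 0 ≤ M := Finset.sum_nonneg fun i _ => add_nonneg (hA0 i) (hB0 i)
  have hAM : ∀ i, A i ≤ M := fun i => by
    have h : A i + B i ≤ M := Finset.single_le_sum (f := fun i => A i + B i)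
      (fun j _ => add_nonneg (hA0 j) (hB0 j)) (Finset.mem_univ i)
    have := hB0 i; linarith
  have hBM : ∀ i, B i ≤ M := fun i => by
    have h : A i + B i ≤ M := Finset.single_le_sum (f := fun i => A i + B i)
      (fun j _ => add_nonneg (hA0 j) (hB0 j)) (Finset.mem_univ i)
    have := hA0 i; linarith
  have hM1 : (0:ℝ) < 1 + M := by linarith
  set S : Set ℝ := {t | 0 ≤ t ∧ t ≤ 1 ∧ (∀ i, t * b i ≤ a i) ∧ (∀ i, t * a i ≤ b i)}
    with hSdef
  have h0S : (0:ℝ) ∈ S := by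
    refine ⟨le_refl 0, zero_le_one, fun i => by simpa using ha0 i,
      fun i => by simpa using hb0 i⟩
  have hbdd : BddAbove S := ⟨1, fun t ht => ht.2.1⟩
  have hclosed : IsClosed S := by
    have h1 : IsClosed {t : ℝ | 0 ≤ t} := isClosed_le continuous_const continuous_id
    have h2 : IsClosed {t : ℝ | t ≤ 1} := isClosed_le continuous_id continuous_const
    have h3 : IsClosed {t : ℝ | ∀ i, t * b i ≤ a i} := by
      rw [Set.setOf_forall]
      exact isClosed_iInter fun i =>
        isClosed_le (continuous_id.mul continuous_const) continuous_const
    have h4 : IsClosed {t : ℝ | ∀ i, t * a i ≤ b i} := by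
      rw [Set.setOf_forall]
      exact isClosed_iInter fun i =>
        isClosed_le (continuous_id.mul continuous_const) continuous_const
    have : S = ({t : ℝ | 0 ≤ t} ∩ {t : ℝ | t ≤ 1}) ∩
        ({t : ℝ | ∀ i, t * b i ≤ a i} ∩ {t : ℝ | ∀ i, t * a i ≤ b i}) := by
      ext t; simp [hSdef, Set.mem_setOf_eq, and_assoc]
    rw [this]
    exact ((h1.inter h2).inter (h3.inter h4))
  set τ : ℝ := sSup S with hτdef
  have hτS : τ ∈ S := hclosed.csSup_mem ⟨0, h0S⟩ hbdd
  obtain ⟨hτ0, hτ1, hτba, hτab⟩ := hτS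
  rcases lt_or_ge τ 1 with hlt | hge
  · -- derive contradiction
    exfalso
    have hBA : ∀ i, τ * A i ≤ B i := hab τ hτ0 hτ1 hτba hτab
    have hAB : ∀ i, τ * B i ≤ A i := hba τ hτ0 hτ1 hτba hτab
    set t' : ℝ := (1 + τ * M) / (1 + M) with ht'def
    have ht'0 : 0 ≤ t' := by
      apply div_nonneg _ hM1.le
      nlinarith
    have ht'1 : t' ≤ 1 := by
      rw [div_le_one hM1]; nlinarith
    have ht'ba : ∀ i, t' * b i ≤ a i := by
      intro i
      have hApos : (0:ℝ) < 1 + A i := by have := hA0 i; linarith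
      have hkey : (1 + τ * M) * (b i * (1 + A i)) ≤ (1 + M) * (a i * (1 + A i)) := by
        have hw : a i * (1 + A i) = b i * (1 + B i) := by rw [ha i, hb i]
        rw [hw]
        have h1 : (1 + M) * (b i * (1 + τ * A i)) ≤ (1 + M) * (b i * (1 + B i)) :=
          mul_le_mul_of_nonneg_left (mul_le_mul_of_nonneg_left
            (by linarith [hBA i]) (hb0 i)) hM1.le
        have h2 : (1 + τ * M) * (b i * (1 + A i)) ≤ (1 + M) * (b i * (1 + τ * A i)) := by
          have hb0i := hb0 i
          have hAMi := hAM i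
          nlinarith [mul_nonneg hb0i (mul_nonneg (sub_nonneg.mpr hAMi) (sub_nonneg.mpr hlt.le))]
        linarith
      have : (1 + τ * M) * b i ≤ (1 + M) * a i :=
        le_of_mul_le_mul_right (by nlinarith [hkey]) hApos
      rw [ht'def, div_mul_eq_mul_div, div_le_iff₀ hM1]
      nlinarith
    have ht'ab : ∀ i, t' * a i ≤ b i := by
      intro i
      have hBpos : (0:ℝ) < 1 + B i := by have := hB0 i; linarith
      have hkey : (1 + τ * M) * (a i * (1 + B i)) ≤ (1 + M) * (b i * (1 + B i)) := by
        have hw : b i * (1 + B i) = a i * (1 + A i) := by rw [ha i, hb i]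
        rw [hw]
        have h1 : (1 + M) * (a i * (1 + τ * B i)) ≤ (1 + M) * (a i * (1 + A i)) :=
          mul_le_mul_of_nonneg_left (mul_le_mul_of_nonneg_left
            (by linarith [hAB i]) (ha0 i)) hM1.le
        have h2 : (1 + τ * M) * (a i * (1 + B i)) ≤ (1 + M) * (a i * (1 + τ * B i)) := by
          have ha0i := ha0 i
          have hBMi := hBM i
          nlinarith [mul_nonneg ha0i (mul_nonneg (sub_nonneg.mpr hBMi) (sub_nonneg.mpr hlt.le))]
        linarith
      have : (1 + τ * M) * a i ≤ (1 + M) * b i :=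
        le_of_mul_le_mul_right (by nlinarith [hkey]) hBpos
      rw [ht'def, div_mul_eq_mul_div, div_le_iff₀ hM1]
      nlinarith
    have ht'S : t' ∈ S := ⟨ht'0, ht'1, ht'ba, ht'ab⟩
    have hle : t' ≤ τ := le_csSup hbdd ht'S
    have : τ < t' := by
      rw [ht'def, lt_div_iff₀ hM1]; nlinarith
    linarith
  · funext i
    have h1 := hτba i
    have h2 := hτab i
    have hb0i := hb0 i
    have ha0i := ha0 i
    nlinarith

lemma exists_fixed {n : ℕ} (φ : Fin n → (Fin n → ℝ) → ℝ)
    (hφ : ∀ i, IsKernelFun n (φ i)) {w : Fin n → ℝ} (hw : w ∈ unitBox n) :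
    ∃ x ∈ unitBox n, ∀ i, x i * (1 + φ i x) = w i := by
  have hw' := mem_unitBox.mp hw
  have h0w : (0 : Fin n → ℝ) ≤ w := fun i => (hw' i).1
  haveI : Fact ((0 : Fin n → ℝ) ≤ w) := ⟨h0w⟩
  set I : Set (Fin n → ℝ) := Set.Icc 0 w with hIdef
  have hsub : ∀ x ∈ I, x ∈ unitBox n := by
    intro x hx
    rw [hIdef, Set.mem_Icc] at hx
    exact mem_unitBox.mpr fun i => ⟨hx.1 i, le_trans (hx.2 i) (hw' i).2⟩
  have hpos : ∀ x ∈ unitBox n, ∀ i, (0:ℝ) < 1 + φ i x := fun x hx i => by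
    have := (hφ i).2.1 x hx; linarith
  set T : (Fin n → ℝ) → (Fin n → ℝ) := fun x i => w i / (1 + φ i x) with hTdef
  have hTmem : ∀ x ∈ I, T x ∈ I := by
    intro x hx
    have hxB := hsub x hx
    rw [hIdef, Set.mem_Icc]
    constructor
    · intro i
      exact div_nonneg (hw' i).1 (hpos x hxB i).le
    · intro i
      have h1 : (1:ℝ) ≤ 1 + φ i x := by have := (hφ i).2.1 x hxB; linarith
      exact div_le_self (hw' i).1 h1
  have hTanti : ∀ x ∈ I, ∀ y ∈ I, x ≤ y → T y ≤ T x := by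
    intro x hx y hy hxy i
    have hmono := (hφ i).2.2.1 x (hsub x hx) y (hsub y hy) (fun j => hxy j)
    have hpx := hpos x (hsub x hx) i
    exact div_le_div_of_nonneg_left (hw' i).1 hpx (by linarith)
  set g : I →o I := ⟨fun x => ⟨T (T x), hTmem _ (hTmem _ x.2)⟩, by
    intro x y hxy
    have h1 : T (y : Fin n → ℝ) ≤ T (x : Fin n → ℝ) := hTanti _ x.2 _ y.2 hxy
    exact Subtype.mk_le_mk.mpr
      (hTanti _ (hTmem _ y.2) _ (hTmem _ x.2) h1)⟩ with hgdef
  set p := g.lfp with hpdef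
  have hfix : g p = p := g.map_lfp
  set a : Fin n → ℝ := (p : Fin n → ℝ) with hadef
  set b : Fin n → ℝ := T a with hbdef
  have haI : a ∈ I := p.2
  have hbI : b ∈ I := hTmem a haI
  have haB : a ∈ unitBox n := hsub a haI
  have hbB : b ∈ unitBox n := hsub b hbI
  have hTba : T b = a := congrArg Subtype.val hfix
  have ha : ∀ i, a i * (1 + φ i b) = w i := by
    intro i
    have : a i = w i / (1 + φ i b) := (congrFun hTba i).symm
    rw [this, div_mul_cancel₀ _ (hpos b hbB i).ne']
  have hb : ∀ i, b i * (1 + φ i a) = w i := by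
    intro i
    have : b i = w i / (1 + φ i a) := rfl
    rw [this, div_mul_cancel₀ _ (hpos a haB i).ne']
  have ha0 : ∀ i, 0 ≤ a i := fun i => ((mem_unitBox.mp haB) i).1
  have hb0 : ∀ i, 0 ≤ b i := fun i => ((mem_unitBox.mp hbB) i).1
  have hEq : a = b := by
    apply key_eq a b w (fun i => φ i b) (fun i => φ i a) ha0 hb0
      (fun i => (hφ i).2.1 b hbB) (fun i => (hφ i).2.1 a haB) ha hb
    · intro t ht0 ht1 hba _ i
      exact hscale φ hφ t ht0 ht1 b hbB a haB hba i
    · intro t ht0 ht1 _ hab i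
      exact hscale φ hφ t ht0 ht1 a haB b hbB hab i
  refine ⟨a, haB, fun i => ?_⟩
  have h := ha i
  rwa [← hEq] at h

lemma uniq_fixed {n : ℕ} (φ : Fin n → (Fin n → ℝ) → ℝ)
    (hφ : ∀ i, IsKernelFun n (φ i)) {w x y : Fin n → ℝ}
    (hx : x ∈ unitBox n) (hy : y ∈ unitBox n)
    (hxf : ∀ i, x i * (1 + φ i x) = w i) (hyf : ∀ i, y i * (1 + φ i y) = w i) :
    x = y := by
  have hx' := mem_unitBox.mp hx
  have hy' := mem_unitBox.mp hy
  apply key_eq x y w (fun i => φ i x) (fun i => φ i y)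
    (fun i => (hx' i).1) (fun i => (hy' i).1)
    (fun i => (hφ i).2.1 x hx) (fun i => (hφ i).2.1 y hy) hxf hyf
  · intro t ht0 ht1 _ hab i
    exact hscale φ hφ t ht0 ht1 x hx y hy hab i
  · intro t ht0 ht1 hba _ i
    exact hscale φ hφ t ht0 ht1 y hy x hx hba i

/-- The restriction of `k_φ(x)_i = x_i(1+φ_i x)` to `H_φ` is a
homeomorphism onto `W = [0,1]^n` whose inverse is the fixed-point map
`h_φ`; in particular `h_φ` is continuous. -/
theorem stmt12 (n : ℕ) (φ : Fin n → (Fin n → ℝ) → ℝ)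
    (hφ : ∀ i, IsKernelFun n (φ i)) :
    ∃ e : {x : Fin n → ℝ | ∃ w ∈ unitBox n,
        x ∈ unitBox n ∧ ∀ i, x i = w i / (1 + φ i x)} ≃ₜ (unitBox n),
      (∀ x, ∀ i, (e x : Fin n → ℝ) i = (x : Fin n → ℝ) i * (1 + φ i x)) ∧
      (∀ w, ∀ i, (e.symm w : Fin n → ℝ) i =
        (w : Fin n → ℝ) i / (1 + φ i (e.symm w))) := by
  have hpos : ∀ x ∈ unitBox n, ∀ i, (0:ℝ) < 1 + φ i x := fun x hx i => by
    have := (hφ i).2.1 x hx; linarith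
  set Hs : Set (Fin n → ℝ) := {x | ∃ w ∈ unitBox n,
      x ∈ unitBox n ∧ ∀ i, x i = w i / (1 + φ i x)} with hHsdef
  set F : (Fin n → ℝ) → (Fin n → ℝ) := fun x i => x i * (1 + φ i x) with hFdef
  have hHW : ∀ x ∈ Hs, x ∈ unitBox n := by
    rintro x ⟨w, hw, hxB, hfix⟩
    exact hxB
  have hHfix : ∀ x ∈ Hs, F x ∈ unitBox n := by
    rintro x ⟨w, hw, hxB, hfix⟩
    have : F x = w := by
      funext i
      have h := hfix i
      rw [hFdef]
      field_simp [h, (hpos x hxB i).ne']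
      rw [h, div_mul_cancel₀ _ (hpos x hxB i).ne']
    rwa [this]
  have hmemH : ∀ x, x ∈ unitBox n → F x ∈ unitBox n → x ∈ Hs := by
    intro x hxB hFB
    refine ⟨F x, hFB, hxB, fun i => ?_⟩
    rw [eq_div_iff (hpos x hxB i).ne']
  have hFcont : ContinuousOn F (unitBox n) := by
    apply continuousOn_pi.mpr
    intro i
    exact ((continuous_apply i).continuousOn).mul
      (continuousOn_const.add (hφ i).1)
  have hWclosed : IsClosed (unitBox n) :=
    isClosed_set_pi fun i _ => isClosed_Icc
  have hWcompact : IsCompact (unitBox n) :=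
    isCompact_univ_pi fun i => isCompact_Icc
  have hHeq : Hs = unitBox n ∩ F ⁻¹' unitBox n := by
    ext x
    constructor
    · intro hx
      exact ⟨hHW x hx, hHfix x hx⟩
    · rintro ⟨h1, h2⟩
      exact hmemH x h1 h2
  have hHclosed : IsClosed Hs := by
    rw [hHeq]
    exact hFcont.preimage_isClosed_of_isClosed hWclosed hWclosed
  have hHcompact : IsCompact Hs :=
    hWcompact.of_isClosed_subset hHclosed (fun x hx => hHW x hx)
  haveI : CompactSpace Hs := isCompact_iff_compactSpace.mp hHcompact
  set f : Hs → (unitBox n : Set (Fin n → ℝ)) :=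
    fun x => ⟨F (x : Fin n → ℝ), hHfix _ x.2⟩ with hfdef
  have hfcont : Continuous f := by
    apply Continuous.subtype_mk
    exact (hFcont.mono fun x hx => hHW x hx).restrict
  have hfbij : Function.Bijective f := by
    constructor
    · intro x y hxy
      have hFeq : F (x : Fin n → ℝ) = F (y : Fin n → ℝ) := congrArg Subtype.val hxy
      apply Subtype.ext
      apply uniq_fixed φ hφ (hHW _ x.2) (hHW _ y.2)
        (w := F (x : Fin n → ℝ)) (fun i => rfl)
      intro i
      exact congrFun hFeq.symm i
    · intro w
      obtain ⟨x, hxB, hxfix⟩ := exists_fixed φ hφ w.2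
      have hFx : F x = (w : Fin n → ℝ) := funext fun i => hxfix i
      refine ⟨⟨x, hmemH x hxB (by rw [hFx]; exact w.2)⟩, ?_⟩
      apply Subtype.ext
      exact hFx
  set E : Hs ≃ (unitBox n : Set (Fin n → ℝ)) := Equiv.ofBijective f hfbij with hEdef
  have hEcont : Continuous E := hfcont
  refine ⟨hEcont.homeoOfEquivCompactToT2, ?_, ?_⟩
  · intro x i
    rfl
  · intro w i
    set e := hEcont.homeoOfEquivCompactToT2
    set x := e.symm w with hxdef
    have hx : e x = w := e.apply_symm_apply w
    have hFx : F (x : Fin n → ℝ) = (w : Fin n → ℝ) := congrArg Subtype.val hx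
    have hxB : (x : Fin n → ℝ) ∈ unitBox n := hHW _ x.2
    have := congrFun hFx i
    rw [eq_div_iff (hpos _ hxB i).ne']
    exact this
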